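/- Let F be the free semigroup on two generators a, b, and let c₀ be the smallest congruence on F containing, for all elements x, y, z, t ∈ F, the pairs (xyzt, yxtz), (x²y, (xy)²), and (xy², yx²). Then the images in the quotient F/c₀ of the six words a², aba, ab², ab, a²b, a³b are pairwise distinct. -/

import Mathlib

/-- All substitution instances of the identities
`xyzt = yxtz`, `x²y = (xy)²`, `xy² = yx²`. -/
def m43Rel : FreeSemigroup (Fin 2) → FreeSemigroup (Fin 2) → Prop := fun u v =>
  (∃ x y z t : FreeSemigroup (Fin 2), u = x * y * z * t ∧ v = y * x * t * z) ∨
  (∃ x y : FreeSemigroup (Fin 2), u = x * x * y ∧ v = x * y * (x * y)) ∨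
  (∃ x y : FreeSemigroup (Fin 2), u = x * (y * y) ∧ v = y * (x * x))

/-- A 13-element semigroup (the free 2-generated semigroup of the variety). -/
structure S13 where
  val : Fin 13
deriving DecidableEq, Fintype

def S13.tblNat : Nat :=
  250822825505655932499787272020286671879617256775059885807454782295457280033454599899486342260388180296743365749909749626531314967467943808149170471000151729940990430239612406523623534554712203382125786674

def S13.tbl (i j : Fin 13) : Fin 13 :=
  ⟨(S13.tblNat >>> (4 * (13 * i.val + j.val))) % 16 % 13, Nat.mod_lt _ (by omega)⟩

instance : Mul S13 := ⟨fun a b => ⟨S13.tbl a.val b.val⟩⟩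

set_option maxHeartbeats 2000000 in
instance : Semigroup S13 where
  mul_assoc := by decide

set_option maxHeartbeats 4000000 in
lemma S13.id1 : ∀ x y z t : S13, x * y * z * t = y * x * t * z := by decide

set_option maxHeartbeats 2000000 in
lemma S13.id2 : ∀ x y : S13, x * x * y = x * y * (x * y) := by decide

set_option maxHeartbeats 2000000 in
lemma S13.id3 : ∀ x y : S13, x * (y * y) = y * (x * x) := by decide

/-- The homomorphism from the free semigroup to `S13`. -/
def φ : FreeSemigroup (Fin 2) →ₙ* S13 :=
  FreeSemigroup.lift ![⟨0⟩, ⟨1⟩]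

lemma phi_rel : ∀ u v, m43Rel u v → φ u = φ v := by
  rintro u v (⟨x, y, z, t, rfl, rfl⟩ | ⟨x, y, rfl, rfl⟩ | ⟨x, y, rfl, rfl⟩) <;>
    simp only [map_mul] <;> [exact S13.id1 _ _ _ _; exact S13.id2 _ _; exact S13.id3 _ _]

lemma conGen_le_ker : conGen m43Rel ≤ Con.ker φ :=
  Con.conGen_le.2 phi_rel

lemma sep (u v : FreeSemigroup (Fin 2)) (h : φ u ≠ φ v) :
    (u : (conGen m43Rel).Quotient) ≠ v := by
  intro he
  exact h (conGen_le_ker ((conGen m43Rel).eq.mp he))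

/-- In the free semigroup on two generators `a b` modulo the smallest
congruence generated by all instances of `xyzt = yxtz`, `x²y = (xy)²`,
`xy² = yx²`, the images of `a²`, `aba`, `ab²`, `ab`, `a²b`, `a³b`
are pairwise distinct. -/
theorem stmt_12 :
    let a := FreeSemigroup.of (0 : Fin 2)
    let b := FreeSemigroup.of (1 : Fin 2)
    ([a * a, a * b * a, a * b * b, a * b, a * a * b, a * a * a * b].map
        (fun w => (w : (conGen m43Rel).Quotient))).Pairwise (· ≠ ·) := by
  intro a b
  change List.Pairwise (· ≠ ·) ([a * a, a * b * a, a * b * b, a * b, a * a * b, a * a * a * b].map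
    (fun w => ((w : FreeSemigroup (Fin 2)) : (conGen m43Rel).Quotient)))
  simp only [List.map]
  refine List.Pairwise.cons ?_ (List.Pairwise.cons ?_ (List.Pairwise.cons ?_
    (List.Pairwise.cons ?_ (List.Pairwise.cons ?_ (List.Pairwise.cons
      (fun x hx => absurd hx (List.not_mem_nil (a := x))) List.Pairwise.nil))))) <;>
  · intro x hx
    simp only [List.mem_cons, List.not_mem_nil, or_false] at hx
    rcases hx with rfl | rfl | rfl | rfl | rfl <;>
      (apply sep; simp only [map_mul, φ, FreeSemigroup.lift_of]; decide)
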